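/- arXiv:1906.10674 — 2 statements merged into one kernel-verified Lean document; each statement's English description precedes it below -/
import Mathlib

section
/- Let P ∈ ℂ⟨X_1,…,X_k⟩ and let L_P ∈ M_m(ℂ⟨X_1,…,X_k⟩) be a linearization of P. Let e_{11} be the m×m matrix unit with a single nonzero entry equal to 1 in position (1,1). Let y = (y_1,…,y_k) be a k-tuple of elements of a unital C*-algebra 𝒜. Then, for any z ∈ ℂ, z·e_{11}⊗1_𝒜 − L_P(y) is invertible in M_m(𝒜) if and only if z·1_𝒜 − P(y) is invertible in 𝒜, and in that case the (1,1)-entry of (z·e_{11}⊗1_𝒜 − L_P(y))^{-1} equals (z·1_𝒜 − P(y))^{-1}. -/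
open scoped BigOperators Kronecker
open MeasureTheory ProbabilityTheory Filter Matrix
open scoped ComplexOrder

noncomputable section

namespace NCOutliers

/-! ### Matrix analysis basics -/

/-- The operator norm of a square complex matrix (acting on Euclidean space). -/
def matOpNorm {ι : Type*} [Fintype ι] [DecidableEq ι] (B : Matrix ι ι ℂ) : ℝ :=
  ‖Matrix.toEuclideanCLM (𝕜 := ℂ) B‖

/-- The smallest singular value of a square complex matrix. -/
def smallestSV {ι : Type*} [Fintype ι] [DecidableEq ι] (B : Matrix ι ι ℂ) : ℝ :=
  sInf ((fun v : EuclideanSpace ℂ ι => ‖Matrix.toEuclideanCLM (𝕜 := ℂ) B v‖) '' {v | ‖v‖ = 1})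

open Classical in
/-- The multiset of eigenvalues (with algebraic multiplicity) of `B` lying in `Γ`. -/
def eigsIn {N : ℕ} (B : Matrix (Fin N) (Fin N) ℂ) (Γ : Set ℂ) : Multiset ℂ :=
  B.charpoly.roots.filter fun z => z ∈ Γ

/-- The number of eigenvalues (with algebraic multiplicity) of `B` lying in `Γ`. -/
def eigCount {N : ℕ} (B : Matrix (Fin N) (Fin N) ℂ) (Γ : Set ℂ) : ℕ :=
  (eigsIn B Γ).card

/-! ### Noncommutative polynomials -/

/-- Evaluation of a noncommutative polynomial in `k` indeterminates. -/
def evalPoly {A : Type*} [Ring A] [Algebra ℂ A] {k : ℕ}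
    (p : FreeAlgebra ℂ (Fin k)) (y : Fin k → A) : A :=
  FreeAlgebra.lift ℂ y p

/-- Evaluation of a noncommutative `*`-polynomial: the last `k` indeterminates are
evaluated at the adjoints. -/
def evalStarPoly {A : Type*} [Ring A] [StarRing A] [Algebra ℂ A] {k : ℕ}
    (p : FreeAlgebra ℂ (Fin k ⊕ Fin k)) (y : Fin k → A) : A :=
  FreeAlgebra.lift ℂ (Sum.elim y fun i => star (y i)) p

/-- A noncommutative polynomial has degree at most one. -/
def DegLeOne {k : ℕ} (p : FreeAlgebra ℂ (Fin k)) : Prop :=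
  p ∈ Submodule.span ℂ ({1} ∪ Set.range (FreeAlgebra.ι ℂ) : Set (FreeAlgebra ℂ (Fin k)))

/-! ### States, freeness, semicircular and circular elements -/

section State
variable {A : Type*} [Ring A] [StarRing A] [Algebra ℂ A] [StarModule ℂ A]

/-- `φ` is a state: unital and positive. -/
def IsState (φ : A →ₗ[ℂ] ℂ) : Prop :=
  φ 1 = 1 ∧ ∀ a : A, 0 ≤ (φ (a * star a)).re ∧ (φ (a * star a)).im = 0

/-- `φ` is a trace. -/
def IsTracial (φ : A →ₗ[ℂ] ℂ) : Prop :=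
  ∀ a b : A, φ (a * b) = φ (b * a)

/-- `φ` is faithful. -/
def IsFaithful (φ : A →ₗ[ℂ] ℂ) : Prop :=
  ∀ a : A, a ≠ 0 → 0 < (φ (a * star a)).re

/-- Freeness of a family of subsets of `A` with respect to `φ`: any alternating product of
centred elements of the generated `*`-subalgebras is centred. -/
def FreeFamily {ι : Type*} (φ : A →ₗ[ℂ] ℂ) (S : ι → Set A) : Prop :=
  ∀ (k : ℕ) (idx : Fin (k+1) → ι) (x : Fin (k+1) → A),
    (∀ l, x l ∈ StarAlgebra.adjoin ℂ (S (idx l))) →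
    (∀ l : Fin k, idx l.castSucc ≠ idx l.succ) →
    (∀ l, φ (x l) = 0) →
    φ (List.ofFn x).prod = 0

/-- Moments of the standard semicircular distribution. -/
def scMoment (k : ℕ) : ℝ :=
  ∫ t in (-2:ℝ)..2, t ^ k * Real.sqrt (4 - t ^ 2) / (2 * Real.pi)

/-- A standard semicircular element. -/
def IsSemicircular (φ : A →ₗ[ℂ] ℂ) (x : A) : Prop :=
  star x = x ∧ ∀ k : ℕ, φ (x ^ k) = scMoment k

/-- A (standard) circular element. -/
def IsCircular (φ : A →ₗ[ℂ] ℂ) (c : A) : Prop :=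
  IsSemicircular φ ((Real.sqrt 2 : ℂ)⁻¹ • (c + star c)) ∧
  IsSemicircular φ (((Real.sqrt 2 : ℂ) * Complex.I)⁻¹ • (c - star c)) ∧
  FreeFamily φ (fun b : Bool =>
    if b then ({(Real.sqrt 2 : ℂ)⁻¹ • (c + star c)} : Set A)
    else {((Real.sqrt 2 : ℂ) * Complex.I)⁻¹ • (c - star c)})

/-- A free circular system. -/
def IsFreeCircularSystem {u : ℕ} (φ : A →ₗ[ℂ] ℂ) (c : Fin u → A) : Prop :=
  (∀ j, IsCircular φ (c j)) ∧
  FreeFamily φ (fun j : Fin u => ({c j, star (c j)} : Set A))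

/-- `c` is a free circular system which is `*`-free from the tuple `a`. -/
def CircSystemFreeFrom {u t : ℕ} (φ : A →ₗ[ℂ] ℂ) (c : Fin u → A) (a : Fin t → A) : Prop :=
  IsFreeCircularSystem φ c ∧
  FreeFamily φ (Sum.elim (fun j : Fin u => ({c j, star (c j)} : Set A))
    (fun _ : Unit => Set.range a))

/-- `ε` commutes with and is tensor-independent (w.r.t. `φ`) from the set `S`. -/
def TensorIndepFrom (φ : A →ₗ[ℂ] ℂ) (ε : A) (S : Set A) : Prop :=
  (∀ x ∈ S, Commute ε x) ∧
  ∀ (q₁ : Polynomial ℂ), ∀ q₂ ∈ StarAlgebra.adjoin ℂ S,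
    φ (Polynomial.aeval ε q₁ * q₂) = φ (Polynomial.aeval ε q₁) * φ q₂

/-- A selfadjoint `±1`-Bernoulli symmetry. -/
def IsBernoulli (φ : A →ₗ[ℂ] ℂ) (ε : A) : Prop :=
  star ε = ε ∧ ε * ε = 1 ∧ φ ε = 0

end State

/-- `x ≥ e·1` in the order of a `C*`-algebra: `x - e·1` is of the form `z* z`. -/
def geScalar {A : Type*} [Ring A] [StarRing A] [Algebra ℂ A] (e : ℝ) (x : A) : Prop :=
  ∃ z : A, x - algebraMap ℂ A (e : ℂ) = star z * z

/-! ### Random matrices -/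

section RM
variable {Ω : Type*} [MeasurableSpace Ω]

/-- The rescaled real and imaginary parts of the entries of the infinite arrays `X`. -/
def entryParts {u : ℕ} (X : Fin u → ℕ → ℕ → Ω → ℂ) :
    Fin u × ℕ × ℕ × Bool → Ω → ℝ :=
  fun p ω => Real.sqrt 2 *
    (if p.2.2.2 then (X p.1 p.2.1 p.2.2.1 ω).re else (X p.1 p.2.1 p.2.2.1 ω).im)

/-- Hypothesis (X1): `u` independent infinite arrays whose (rescaled) real and imaginary
parts are i.i.d. centred with variance one and finite fourth moment. -/
structure X1Hyp {u : ℕ} (μ : Measure Ω) (X : Fin u → ℕ → ℕ → Ω → ℂ) : Prop where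
  meas : ∀ p, Measurable (entryParts X p)
  indep : iIndepFun (entryParts X) μ
  ident : ∀ p q, p.1 = q.1 → IdentDistrib (entryParts X p) (entryParts X q) μ μ
  centered : ∀ p, ∫ ω, entryParts X p ω ∂μ = 0
  variance : ∀ p, ∫ ω, (entryParts X p ω) ^ 2 ∂μ = 1
  fourthMoment : ∀ p, Integrable (fun ω => (entryParts X p ω) ^ 4) μ

/-- The `N × N` corner of the infinite array `X · v`. -/
def XMat {u : ℕ} (X : Fin u → ℕ → ℕ → Ω → ℂ) (N : ℕ) (v : Fin u) (ω : Ω) :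
    Matrix (Fin N) (Fin N) ℂ :=
  Matrix.of fun i j => X v i.1 j.1 ω

/-- The normalized matrix `X_N^{(v)}/√N`. -/
def XMatScaled {u : ℕ} (X : Fin u → ℕ → ℕ → Ω → ℂ) (N : ℕ) (v : Fin u) (ω : Ω) :
    Matrix (Fin N) (Fin N) ℂ :=
  ((Real.sqrt N : ℂ))⁻¹ • XMat X N v ω

/-- The random matrix `M_N = P(X_N/√N, A_N)`. -/
def MMat {u t : ℕ} (P : FreeAlgebra ℂ (Fin (u + t)))
    (X : Fin u → ℕ → ℕ → Ω → ℂ)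
    (AA : (N : ℕ) → Fin t → Matrix (Fin N) (Fin N) ℂ) (N : ℕ) (ω : Ω) :
    Matrix (Fin N) (Fin N) ℂ :=
  evalPoly P (Fin.append (fun v => XMatScaled X N v ω) (AA N))

end RM

/-- The deterministic matrix `M_N⁽⁰⁾ = P(0,…,0, A_N)`. -/
def M0Mat {u t : ℕ} (P : FreeAlgebra ℂ (Fin (u + t)))
    (AA : (N : ℕ) → Fin t → Matrix (Fin N) (Fin N) ℂ) (N : ℕ) :
    Matrix (Fin N) (Fin N) ℂ :=
  evalPoly P (Fin.append (fun _ : Fin u => 0) (AA N))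

/-- Hypothesis (A1): uniformly bounded deterministic matrices converging in
`*`-distribution to the tuple `a`. -/
def A1Hyp {A : Type*} [Ring A] [StarRing A] [Algebra ℂ A] {t : ℕ}
    (AA : (N : ℕ) → Fin t → Matrix (Fin N) (Fin N) ℂ)
    (φ : A →ₗ[ℂ] ℂ) (a : Fin t → A) : Prop :=
  (∀ i : Fin t, ∃ C : ℝ, ∀ N, matOpNorm (AA N i) ≤ C) ∧
  ∀ p : FreeAlgebra ℂ (Fin t ⊕ Fin t),
    Tendsto (fun N : ℕ => (N : ℂ)⁻¹ * (evalStarPoly p (AA N)).trace)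
      atTop (nhds (φ (evalStarPoly p a)))

/-! ### Operator-valued objects -/

section OV
variable {A : Type*} [Ring A] [StarRing A] [Algebra ℂ A]
variable {ι : Type*} [Fintype ι] [DecidableEq ι]

/-- The elementary tensor `ζ ⊗ x ∈ M_ι(A)`. -/
def tensorMat (ζ : Matrix ι ι ℂ) (x : A) : Matrix ι ι A :=
  Matrix.of fun i j => ζ i j • x

/-- Embedding of scalar matrices in `M_ι(A)`. -/
def embedMat (b : Matrix ι ι ℂ) : Matrix ι ι A := b.map (algebraMap ℂ A)

/-- The conditional expectation `id ⊗ φ : M_ι(A) → M_ι(ℂ)`, as a linear map. -/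
def entryE (φ : A →ₗ[ℂ] ℂ) : Matrix ι ι A →ₗ[ℂ] Matrix ι ι ℂ where
  toFun M := Matrix.of fun i j => φ (M i j)
  map_add' M N := by ext i j; simp [Matrix.add_apply]
  map_smul' r M := by ext i j; simp [Matrix.smul_apply]

/-- The embedding `M_ι(ℂ) → M_ι(A)`, as a linear map. -/
def embedL : Matrix ι ι ℂ →ₗ[ℂ] Matrix ι ι A :=
  (Algebra.ofId ℂ A).mapMatrix.toLinearMap

/-- The linear map `b ↦ (id ⊗ φ)(r · (b ⊗ 1) · r)` on `M_ι(ℂ)`. -/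
def sandwich (φ : A →ₗ[ℂ] ℂ) (r : Matrix ι ι A) :
    Matrix ι ι ℂ →ₗ[ℂ] Matrix ι ι ℂ :=
  (entryE φ).comp (((LinearMap.mulLeft ℂ r).comp (LinearMap.mulRight ℂ r)).comp embedL)

/-- The `M_ι(ℂ)`-valued Cauchy transform `G_x(b) = (id ⊗ φ)[(x - b)⁻¹]`. -/
def cauchyG (φ : A →ₗ[ℂ] ℂ) (x : Matrix ι ι A) (b : Matrix ι ι ℂ) : Matrix ι ι ℂ :=
  entryE φ (Ring.inverse (x - embedMat b))

end OV

/-- Identification of `M_n(M_m(ℂ))` with `M_{n·m}(ℂ)`. -/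
def blockify {n m : ℕ} (M : Matrix (Fin n) (Fin n) (Matrix (Fin m) (Fin m) ℂ)) :
    Matrix (Fin n × Fin m) (Fin n × Fin m) ℂ :=
  Matrix.of fun p q => M p.1 q.1 p.2 q.2

/-- Complete positivity of a linear self-map of `M_m(ℂ)`. -/
def IsCompletelyPositive {m : ℕ}
    (η : Matrix (Fin m) (Fin m) ℂ →ₗ[ℂ] Matrix (Fin m) (Fin m) ℂ) : Prop :=
  ∀ (n : ℕ) (M : Matrix (Fin n) (Fin n) (Matrix (Fin m) (Fin m) ℂ)),
    (blockify M).PosSemidef → (blockify (M.map η)).PosSemidef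

/-- The matrix upper half-plane: imaginary part positive definite. -/
def MatUpper {m : ℕ} (b : Matrix (Fin m) (Fin m) ℂ) : Prop :=
  ((((2 : ℂ) * Complex.I)⁻¹) • (b - bᴴ)).PosDef

/-- `s` is a centred `M_m(ℂ)`-valued semicircular element of variance `η`, characterized by
its Cauchy transform satisfying `G_s(b) = (-b - η(G_s(b)))⁻¹` on the upper half-plane. -/
def IsMatSemicircular {m : ℕ} {A : Type*} [Ring A] [StarRing A] [Algebra ℂ A]
    (φ : A →ₗ[ℂ] ℂ) (η : Matrix (Fin m) (Fin m) ℂ →ₗ[ℂ] Matrix (Fin m) (Fin m) ℂ)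
    (s : Matrix (Fin m) (Fin m) A) : Prop :=
  IsSelfAdjoint s ∧ ∀ b : Matrix (Fin m) (Fin m) ℂ, MatUpper b →
    IsUnit (s - embedMat b) ∧ cauchyG φ s b = Ring.inverse (-b - η (cauchyG φ s b))

/-- Freeness with amalgamation over `M_m(ℂ)` of `s` and `y`, w.r.t. `E = id ⊗ φ`. -/
def FreeWithAmalg {m : ℕ} {A : Type*} [Ring A] [StarRing A] [Algebra ℂ A]
    (φ : A →ₗ[ℂ] ℂ) (s y : Matrix (Fin m) (Fin m) A) : Prop :=
  ∀ (k : ℕ) (idx : Fin (k+1) → Bool) (x : Fin (k+1) → Matrix (Fin m) (Fin m) A),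
    (∀ l, x l ∈ Algebra.adjoin ℂ
      (Set.range (embedMat : Matrix (Fin m) (Fin m) ℂ → Matrix (Fin m) (Fin m) A) ∪
        {if idx l then s else y})) →
    (∀ l : Fin k, idx l.castSucc ≠ idx l.succ) →
    (∀ l, entryE φ (x l) = 0) →
    entryE φ (List.ofFn x).prod = 0

/-! ### Linearizations -/

/-- `L` is a linearization of `P`, with `(1,1)`-corner `0`, entries of degree at most one,
lower-right corner `Q` invertible, and `P = -u* Q⁻¹ v`. -/
def IsLinearization {k n : ℕ} (P : FreeAlgebra ℂ (Fin k))
    (L : Matrix (Fin (n+1)) (Fin (n+1)) (FreeAlgebra ℂ (Fin k))) : Prop :=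
  L 0 0 = 0 ∧ (∀ i j, DegLeOne (L i j)) ∧
  ∃ Qi : Matrix (Fin n) (Fin n) (FreeAlgebra ℂ (Fin k)),
    L.submatrix Fin.succ Fin.succ * Qi = 1 ∧
    Qi * L.submatrix Fin.succ Fin.succ = 1 ∧
    P = -∑ i : Fin n, ∑ j : Fin n, L 0 i.succ * Qi i j * L j.succ 0

/-- The linear pencil `γ ⊗ 1 + Σ_v ζ_v ⊗ y_v + Σ_k β_k ⊗ y_{u+k}`, as a matrix of
noncommutative polynomials in `u + t` indeterminates. -/
def linFromCoeffs {u t n : ℕ} (γ : Matrix (Fin (n+1)) (Fin (n+1)) ℂ)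
    (ζ : Fin u → Matrix (Fin (n+1)) (Fin (n+1)) ℂ)
    (β : Fin t → Matrix (Fin (n+1)) (Fin (n+1)) ℂ) :
    Matrix (Fin (n+1)) (Fin (n+1)) (FreeAlgebra ℂ (Fin (u+t))) :=
  Matrix.of fun i j =>
    algebraMap ℂ _ (γ i j)
      + ∑ v : Fin u, ζ v i j • FreeAlgebra.ι ℂ (Fin.castAdd t v)
      + ∑ k : Fin t, β k i j • FreeAlgebra.ι ℂ (Fin.natAdd u k)

/-- The normalized trace state `tr_n ⊗ φ` on `M_n(A)`. -/
def trState {A : Type*} [Ring A] [Algebra ℂ A] (φ : A →ₗ[ℂ] ℂ) (n : ℕ) :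
    Matrix (Fin n) (Fin n) A →ₗ[ℂ] ℂ where
  toFun M := (n : ℂ)⁻¹ * ∑ i, φ (M i i)
  map_add' M N := by simp [Matrix.add_apply, Finset.sum_add_distrib, mul_add]
  map_smul' r M := by
    simp [Matrix.smul_apply, Finset.mul_sum, mul_assoc, mul_left_comm]


/-- The entrywise sum of norms of a matrix over a normed ring (dominates the `C*`-norm). -/
def matSumNorm {A : Type*} [NormedRing A] {ι : Type*} [Fintype ι] (M : Matrix ι ι A) : ℝ :=
  ∑ i, ∑ j, ‖M i j‖

/-- The matrix pencil `z (e₁₁ ⊗ I_N) - γ ⊗ I_N - Σ_k β_k ⊗ B_k`. -/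
def pencilMat {t n N : ℕ} (γ : Matrix (Fin (n+1)) (Fin (n+1)) ℂ)
    (β : Fin t → Matrix (Fin (n+1)) (Fin (n+1)) ℂ)
    (B : Fin t → Matrix (Fin N) (Fin N) ℂ) (z : ℂ) :
    Matrix (Fin (n+1) × Fin N) (Fin (n+1) × Fin N) ℂ :=
  z • (Matrix.single (0 : Fin (n+1)) 0 (1 : ℂ) ⊗ₖ (1 : Matrix (Fin N) (Fin N) ℂ))
    - γ ⊗ₖ (1 : Matrix (Fin N) (Fin N) ℂ) - ∑ k, β k ⊗ₖ B k

/-- The matrix `Σ_v ζ_v ⊗ B_v`. -/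
def yMatK {u n N : ℕ} (ζ : Fin u → Matrix (Fin (n+1)) (Fin (n+1)) ℂ)
    (B : Fin u → Matrix (Fin N) (Fin N) ℂ) :
    Matrix (Fin (n+1) × Fin N) (Fin (n+1) × Fin N) ℂ :=
  ∑ v, ζ v ⊗ₖ B v


private lemma ringInverse_of_mul_eq_one {R : Type*} [Ring R] {a b : R}
    (h1 : a * b = 1) (h2 : b * a = 1) : Ring.inverse a = b := by
  have : Ring.inverse (((⟨a, b, h1, h2⟩ : Rˣ) : R)) = ((⟨a, b, h1, h2⟩ : Rˣ)⁻¹ : Rˣ) :=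
    Ring.inverse_unit _
  simpa using this

/-- The equivalence `Fin 1 ⊕ Fin n ≃ Fin (n+1)` sending `inl` to `0` and `inr i` to `i.succ`. -/
private def finOneSumEquiv (n : ℕ) : Fin 1 ⊕ Fin n ≃ Fin (n + 1) where
  toFun := Sum.elim (fun _ => 0) Fin.succ
  invFun := Fin.cases (Sum.inl 0) Sum.inr
  left_inv := by
    rintro (i | i)
    · simp [Subsingleton.elim i 0]
    · simp
  right_inv i := by induction i using Fin.cases <;> simp

set_option maxHeartbeats 1000000 in
/-- Lemma "inversible": `z e₁₁ ⊗ 1 - L_P(y)` is invertible iff `z·1 - P(y)` is,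
and in that case the `(1,1)` entry of the inverse is `(z·1 - P(y))⁻¹`. -/
theorem linearization_invertibility
    {k n : ℕ} (P : FreeAlgebra ℂ (Fin k))
    (L : Matrix (Fin (n+1)) (Fin (n+1)) (FreeAlgebra ℂ (Fin k)))
    (hL : IsLinearization P L)
    {𝒜 : Type*} [NormedRing 𝒜] [StarRing 𝒜] [CStarRing 𝒜] [NormedAlgebra ℂ 𝒜]
    [StarModule ℂ 𝒜] [CompleteSpace 𝒜]
    (y : Fin k → 𝒜) (z : ℂ) :
    (IsUnit (Matrix.single (0 : Fin (n+1)) (0 : Fin (n+1)) (algebraMap ℂ 𝒜 z)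
        - L.map (fun p => evalPoly p y)) ↔
      IsUnit (algebraMap ℂ 𝒜 z - evalPoly P y)) ∧
    (IsUnit (algebraMap ℂ 𝒜 z - evalPoly P y) →
      Ring.inverse (Matrix.single (0 : Fin (n+1)) (0 : Fin (n+1)) (algebraMap ℂ 𝒜 z)
          - L.map (fun p => evalPoly p y)) 0 0
        = Ring.inverse (algebraMap ℂ 𝒜 z - evalPoly P y)) := by
  classical
  obtain ⟨hL00, -, Qi, hQ1, hQ2, hP⟩ := hL
  set ev : FreeAlgebra ℂ (Fin k) →ₐ[ℂ] 𝒜 := FreeAlgebra.lift ℂ y with hev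
  have hevP : ∀ p : FreeAlgebra ℂ (Fin k), evalPoly p y = ev p := fun _ => rfl
  set z' : 𝒜 := algebraMap ℂ 𝒜 z with hz'
  set s : 𝒜 := z' - evalPoly P y with hs
  set M : Matrix (Fin (n+1)) (Fin (n+1)) 𝒜 :=
    Matrix.single (0 : Fin (n+1)) (0 : Fin (n+1)) z'
      - L.map (fun p => evalPoly p y) with hM
  set e : Fin 1 ⊕ Fin n ≃ Fin (n + 1) := finOneSumEquiv n with he
  -- the blocks of `M` (after reindexing along `e`)
  set A1 : Matrix (Fin 1) (Fin 1) 𝒜 := Matrix.of (fun _ _ => z') with hA1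
  set B : Matrix (Fin 1) (Fin n) 𝒜 := Matrix.of (fun _ j => -(ev (L 0 j.succ))) with hB
  set C : Matrix (Fin n) (Fin 1) 𝒜 := Matrix.of (fun i _ => -(ev (L i.succ 0))) with hC
  set Q : Matrix (Fin n) (Fin n) 𝒜 := (L.submatrix Fin.succ Fin.succ).map ev with hQ
  set Q' : Matrix (Fin n) (Fin n) 𝒜 := Qi.map ev with hQ'
  set D : Matrix (Fin n) (Fin n) 𝒜 := -Q with hD
  set Di : Matrix (Fin n) (Fin n) 𝒜 := -Q' with hDi
  have hQQ' : Q * Q' = 1 := by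
    have := congrArg (ev.mapMatrix :
      Matrix (Fin n) (Fin n) (FreeAlgebra ℂ (Fin k)) →ₐ[ℂ] Matrix (Fin n) (Fin n) 𝒜) hQ1
    simpa [_root_.map_mul, _root_.map_one, AlgHom.mapMatrix_apply, hQ, hQ'] using this
  have hQ'Q : Q' * Q = 1 := by
    have := congrArg (ev.mapMatrix :
      Matrix (Fin n) (Fin n) (FreeAlgebra ℂ (Fin k)) →ₐ[ℂ] Matrix (Fin n) (Fin n) 𝒜) hQ2
    simpa [_root_.map_mul, _root_.map_one, AlgHom.mapMatrix_apply, hQ, hQ'] using this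
  have hDDi : D * Di = 1 := by
    rw [hD, hDi, Matrix.neg_mul, Matrix.mul_neg, neg_neg, hQQ']
  have hDiD : Di * D = 1 := by
    rw [hD, hDi, Matrix.neg_mul, Matrix.mul_neg, neg_neg, hQ'Q]
  set S : Matrix (Fin 1) (Fin 1) 𝒜 := Matrix.of (fun _ _ => s) with hS
  set F : Matrix (Fin 1 ⊕ Fin n) (Fin 1 ⊕ Fin n) 𝒜 := M.submatrix e e with hF
  have hMF : M = F.submatrix e.symm e.symm := by
    rw [hF, Matrix.submatrix_submatrix]
    simp [Equiv.self_comp_symm]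
  have hFblocks : F = Matrix.fromBlocks A1 B C D := by
    ext i j
    rcases i with i | i <;> rcases j with j | j <;>
      simp [hF, hM, he, finOneSumEquiv, Matrix.single, hA1, hB, hC, hD, hQ,
        Matrix.submatrix_apply, Matrix.sub_apply, Matrix.map_apply, hevP, hL00,
        (Fin.succ_ne_zero _), (Fin.succ_ne_zero _).symm]
  -- Schur complement computation
  have hPev : evalPoly P y
      = -∑ i : Fin n, ∑ j : Fin n, ev (L 0 i.succ) * ev (Qi i j) * ev (L j.succ 0) := by
    rw [hevP, hP]
    simp [map_sum, _root_.map_mul]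
  have hSchur : A1 = S + B * Di * C := by
    have hBDC : ∀ i j : Fin 1, (B * Di * C) i j = evalPoly P y := by
      intro i j
      have expand : (B * Di * C) i j = ∑ x : Fin n, ∑ u : Fin n, B i u * Di u x * C x j := by
        simp [Matrix.mul_apply, Finset.sum_mul]
      have term : ∀ x u : Fin n,
          B i u * Di u x * C x j = -(ev (L 0 u.succ) * ev (Qi u x) * ev (L x.succ 0)) := by
        intro x u
        simp [hB, hC, hDi, hQ', neg_mul, mul_neg, neg_neg]
      rw [expand, hPev, Finset.sum_comm]
      simp [term, Finset.sum_neg_distrib]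
    ext i j
    have := hBDC i j
    simp only [hS, Matrix.add_apply, Matrix.of_apply, this, hA1, hs]
    abel
  -- LDU factorization of `F`
  set U : Matrix (Fin 1 ⊕ Fin n) (Fin 1 ⊕ Fin n) 𝒜 := Matrix.fromBlocks 1 (B * Di) 0 1 with hU
  set U' : Matrix (Fin 1 ⊕ Fin n) (Fin 1 ⊕ Fin n) 𝒜 :=
    Matrix.fromBlocks 1 (-(B * Di)) 0 1 with hU'
  set V : Matrix (Fin 1 ⊕ Fin n) (Fin 1 ⊕ Fin n) 𝒜 := Matrix.fromBlocks 1 0 (Di * C) 1 with hV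
  set V' : Matrix (Fin 1 ⊕ Fin n) (Fin 1 ⊕ Fin n) 𝒜 :=
    Matrix.fromBlocks 1 0 (-(Di * C)) 1 with hV'
  set G : Matrix (Fin 1 ⊕ Fin n) (Fin 1 ⊕ Fin n) 𝒜 := Matrix.fromBlocks S 0 0 D with hG
  have key : ∀ X X' Y : Matrix (Fin 1 ⊕ Fin n) (Fin 1 ⊕ Fin n) 𝒜,
      X * X' = 1 → X * (X' * Y) = Y := fun X X' Y h => by
    rw [← Matrix.mul_assoc, h, Matrix.one_mul]
  have hUU' : U * U' = 1 := by
    rw [hU, hU', Matrix.fromBlocks_multiply, ← Matrix.fromBlocks_one]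
    congr 1 <;> simp
  have hU'U : U' * U = 1 := by
    rw [hU, hU', Matrix.fromBlocks_multiply, ← Matrix.fromBlocks_one]
    congr 1 <;> simp
  have hVV' : V * V' = 1 := by
    rw [hV, hV', Matrix.fromBlocks_multiply, ← Matrix.fromBlocks_one]
    congr 1 <;> simp
  have hV'V : V' * V = 1 := by
    rw [hV, hV', Matrix.fromBlocks_multiply, ← Matrix.fromBlocks_one]
    congr 1 <;> simp
  have hBDiD : B * Di * D = B := by rw [Matrix.mul_assoc, hDiD, Matrix.mul_one]
  have hBDiD' : B * (Di * D) = B := by rw [hDiD, Matrix.mul_one]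
  have hDDiC : D * (Di * C) = C := by rw [← Matrix.mul_assoc, hDDi, Matrix.one_mul]
  have hUGV : U * G * V = F := by
    rw [hFblocks, hU, hG, hV, Matrix.fromBlocks_multiply, Matrix.fromBlocks_multiply, hSchur]
    congr 1 <;>
      simp [hBDiD, hBDiD', hDDiC, Matrix.mul_assoc]
  have hG_eq : U' * (F * V') = G := by
    rw [← hUGV]
    simp only [Matrix.mul_assoc]
    rw [key U' U _ hU'U, hVV', Matrix.mul_one]
  -- forward construction: invertibility of `s` gives invertibility of `M`
  have constr : IsUnit s →
      IsUnit M ∧ Ring.inverse M 0 0 = Ring.inverse s := by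
    intro hu
    set w : 𝒜 := Ring.inverse s with hw
    have hw1 : s * w = 1 := Ring.mul_inverse_cancel s hu
    have hw2 : w * s = 1 := Ring.inverse_mul_cancel s hu
    set Si : Matrix (Fin 1) (Fin 1) 𝒜 := Matrix.of (fun _ _ => w) with hSi
    have hSSi : S * Si = 1 := by
      ext i j
      fin_cases i; fin_cases j
      simp [Matrix.mul_apply, hS, hSi, hw1, Matrix.one_apply]
    have hSiS : Si * S = 1 := by
      ext i j
      fin_cases i; fin_cases j
      simp [Matrix.mul_apply, hS, hSi, hw2, Matrix.one_apply]
    set G' : Matrix (Fin 1 ⊕ Fin n) (Fin 1 ⊕ Fin n) 𝒜 := Matrix.fromBlocks Si 0 0 Di with hG'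
    have hGG' : G * G' = 1 := by
      rw [hG, hG', Matrix.fromBlocks_multiply, ← Matrix.fromBlocks_one]
      congr 1 <;> simp [hSSi, hDDi]
    have hG'G : G' * G = 1 := by
      rw [hG, hG', Matrix.fromBlocks_multiply, ← Matrix.fromBlocks_one]
      congr 1 <;> simp [hSiS, hDiD]
    set N : Matrix (Fin 1 ⊕ Fin n) (Fin 1 ⊕ Fin n) 𝒜 := V' * (G' * U') with hN
    have hFN : F * N = 1 := by
      rw [← hUGV, hN]
      simp only [Matrix.mul_assoc]
      rw [key V V' _ hVV', key G G' _ hGG', hUU']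
    have hNF : N * F = 1 := by
      rw [← hUGV, hN]
      simp only [Matrix.mul_assoc]
      rw [key U' U _ hU'U, key G' G _ hG'G, hV'V]
    set Mi : Matrix (Fin (n+1)) (Fin (n+1)) 𝒜 := N.submatrix e.symm e.symm with hMi
    have hMMi : M * Mi = 1 := by
      rw [hMF, hMi, Matrix.submatrix_mul_equiv, hFN, Matrix.submatrix_one_equiv]
    have hMiM : Mi * M = 1 := by
      rw [hMF, hMi, Matrix.submatrix_mul_equiv, hNF, Matrix.submatrix_one_equiv]
    refine ⟨⟨⟨M, Mi, hMMi, hMiM⟩, rfl⟩, ?_⟩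
    have hinv : Ring.inverse M = Mi := ringInverse_of_mul_eq_one hMMi hMiM
    have hsymm0 : e.symm 0 = Sum.inl 0 := by simp [he, finOneSumEquiv]
    rw [hinv, hMi, Matrix.submatrix_apply, hsymm0, hN]
    simp [hV', hG', hU', Matrix.fromBlocks_multiply, hSi, hw]
  constructor
  · constructor
    · -- `M` invertible → `s` invertible
      intro hu
      obtain ⟨uM, huM⟩ := hu
      have hMW : M * Units.val uM⁻¹ = 1 := by
        rw [← huM]; exact uM.mul_inv
      have hWM : Units.val uM⁻¹ * M = 1 := by
        rw [← huM]; exact uM.inv_mul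
      set W : Matrix (Fin 1 ⊕ Fin n) (Fin 1 ⊕ Fin n) 𝒜 :=
        (Units.val uM⁻¹).submatrix e e with hW
      have hFW : F * W = 1 := by
        rw [hF, hW, Matrix.submatrix_mul_equiv, hMW, Matrix.submatrix_one_equiv]
      have hWF : W * F = 1 := by
        rw [hF, hW, Matrix.submatrix_mul_equiv, hWM, Matrix.submatrix_one_equiv]
      set K : Matrix (Fin 1 ⊕ Fin n) (Fin 1 ⊕ Fin n) 𝒜 := V * (W * U) with hK
      have hGK : G * K = 1 := by
        rw [← hG_eq, hK]
        simp only [Matrix.mul_assoc]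
        rw [key V' V _ hV'V, key F W _ hFW, hU'U]
      have hKG : K * G = 1 := by
        rw [← hG_eq, hK]
        simp only [Matrix.mul_assoc]
        rw [key U U' _ hUU', key W F _ hWF, hVV']
      have h1 : s * K (Sum.inl 0) (Sum.inl 0) = 1 := by
        have := congrFun (congrFun hGK (Sum.inl 0)) (Sum.inl 0)
        simpa [Matrix.mul_apply, Fintype.sum_sum_type, hG, hS, Matrix.one_apply] using this
      have h2 : K (Sum.inl 0) (Sum.inl 0) * s = 1 := by
        have := congrFun (congrFun hKG (Sum.inl 0)) (Sum.inl 0)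
        simpa [Matrix.mul_apply, Fintype.sum_sum_type, hG, hS, Matrix.one_apply] using this
      exact ⟨⟨s, K (Sum.inl 0) (Sum.inl 0), h1, h2⟩, rfl⟩
    · -- `s` invertible → `M` invertible
      intro hu
      exact (constr hu).1
  · intro hu
    exact (constr hu).2

end NCOutliers
end
end

section
/- Let P ∈ ℂ⟨X_1,…,X_k⟩ and let L_P ∈ M_m(ℂ⟨X_1,…,X_k⟩) be a linearization of P. There exist two polynomials T_1 and T_2 in k commuting indeterminates, with nonnegative coefficients, depending only on L_P, such that for every k-tuple y = (y_1,…,y_k) of elements of a unital C*-algebra 𝒜 and every z ∈ ℂ such that z·1_𝒜 − P(y) is invertible, one has ‖(z·e_{11}⊗1_𝒜 − L_P(y))^{-1}‖ ≤ T_1(‖y_1‖,…,‖y_k‖)·‖(z·1_𝒜 − P(y))^{-1}‖ + T_2(‖y_1‖,…,‖y_k‖), where e_{11} is the m×m matrix unit with 1 in position (1,1). -/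
open scoped BigOperators Kronecker
open MeasureTheory ProbabilityTheory Filter Matrix
open scoped ComplexOrder

noncomputable section

namespace NCOutliers

/-! ### Auxiliary material for the resolvent bound -/

section ResolventAux

/-- Nonnegative coefficients of a multivariate polynomial. -/
private def NNC {k : ℕ} (T : MvPolynomial (Fin k) ℝ) : Prop :=
  ∀ d, 0 ≤ MvPolynomial.coeff d T

private lemma NNC.add {k : ℕ} {S T : MvPolynomial (Fin k) ℝ} (hS : NNC S) (hT : NNC T) :
    NNC (S + T) := fun d => by
  rw [MvPolynomial.coeff_add]; exact add_nonneg (hS d) (hT d)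

private lemma NNC.mul {k : ℕ} {S T : MvPolynomial (Fin k) ℝ} (hS : NNC S) (hT : NNC T) :
    NNC (S * T) := fun d => by
  classical
  rw [MvPolynomial.coeff_mul]
  exact Finset.sum_nonneg fun p _ => mul_nonneg (hS _) (hT _)

private lemma NNC.sum {k : ℕ} {ι : Type*} (s : Finset ι) (f : ι → MvPolynomial (Fin k) ℝ)
    (h : ∀ i ∈ s, NNC (f i)) : NNC (∑ i ∈ s, f i) := fun d => by
  rw [MvPolynomial.coeff_sum]
  exact Finset.sum_nonneg fun i hi => h i hi d

private lemma NNC.one {k : ℕ} : NNC (1 : MvPolynomial (Fin k) ℝ) := fun d => by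
  classical
  rw [← MvPolynomial.C_1, MvPolynomial.coeff_C]
  split <;> norm_num

private lemma evalNN {k : ℕ} {T : MvPolynomial (Fin k) ℝ} (hT : NNC T)
    {x : Fin k → ℝ} (hx : ∀ i, 0 ≤ x i) : 0 ≤ MvPolynomial.eval x T := by
  rw [MvPolynomial.eval_eq]
  exact Finset.sum_nonneg fun d _ =>
    mul_nonneg (hT d) (Finset.prod_nonneg fun i _ => pow_nonneg (hx i) _)

private lemma norm_one_le_one (𝒜 : Type) [NormedRing 𝒜] [StarRing 𝒜] [CStarRing 𝒜] :
    ‖(1 : 𝒜)‖ ≤ 1 := by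
  have h : ‖star (1 : 𝒜) * 1‖ = ‖(1 : 𝒜)‖ * ‖(1 : 𝒜)‖ := CStarRing.norm_star_mul_self
  rw [star_one, one_mul] at h
  nlinarith [norm_nonneg (1 : 𝒜)]

/-- Every noncommutative polynomial admits a universal polynomial norm bound with
nonnegative coefficients. -/
private lemma exists_bound {k : ℕ} (p : FreeAlgebra ℂ (Fin k)) :
    ∃ T : MvPolynomial (Fin k) ℝ, NNC T ∧
      ∀ (𝒜 : Type) [NormedRing 𝒜] [StarRing 𝒜] [CStarRing 𝒜] [NormedAlgebra ℂ 𝒜]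
        [StarModule ℂ 𝒜] [CompleteSpace 𝒜] (y : Fin k → 𝒜),
        ‖evalPoly p y‖ ≤ MvPolynomial.eval (fun i => ‖y i‖) T := by
  classical
  induction p using FreeAlgebra.induction with
  | grade0 r =>
    refine ⟨MvPolynomial.C ‖r‖, ?_, ?_⟩
    · intro d
      rw [MvPolynomial.coeff_C]
      split <;> simp [norm_nonneg]
    · intro 𝒜 _ _ _ _ _ _ y
      have h : evalPoly (algebraMap ℂ (FreeAlgebra ℂ (Fin k)) r) y = algebraMap ℂ 𝒜 r := by
        simp [evalPoly]
      rw [h, MvPolynomial.eval_C, Algebra.algebraMap_eq_smul_one, norm_smul]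
      calc ‖r‖ * ‖(1 : 𝒜)‖ ≤ ‖r‖ * 1 :=
            mul_le_mul_of_nonneg_left (norm_one_le_one 𝒜) (norm_nonneg r)
        _ = ‖r‖ := mul_one _
  | grade1 x =>
    refine ⟨MvPolynomial.X x, ?_, ?_⟩
    · intro d
      rw [MvPolynomial.coeff_X']
      split <;> norm_num
    · intro 𝒜 _ _ _ _ _ _ y
      simp [evalPoly]
  | mul a b ha hb =>
    obtain ⟨Ta, haN, haB⟩ := ha
    obtain ⟨Tb, hbN, hbB⟩ := hb
    refine ⟨Ta * Tb, haN.mul hbN, ?_⟩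
    intro 𝒜 _ _ _ _ _ _ y
    have h : evalPoly (a * b) y = evalPoly a y * evalPoly b y := map_mul _ _ _
    rw [h, _root_.map_mul]
    exact (norm_mul_le _ _).trans
      (mul_le_mul (haB 𝒜 y) (hbB 𝒜 y) (norm_nonneg _) (evalNN haN fun i => norm_nonneg _))
  | add a b ha hb =>
    obtain ⟨Ta, haN, haB⟩ := ha
    obtain ⟨Tb, hbN, hbB⟩ := hb
    refine ⟨Ta + Tb, haN.add hbN, ?_⟩
    intro 𝒜 _ _ _ _ _ _ y
    have h : evalPoly (a + b) y = evalPoly a y + evalPoly b y := map_add _ _ _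
    rw [h, _root_.map_add]
    exact (norm_add_le _ _).trans (add_le_add (haB 𝒜 y) (hbB 𝒜 y))

/-- The canonical equivalence `Fin 1 ⊕ Fin n ≃ Fin (n+1)` sending `inl` to `0` and
`inr i` to `i.succ`. -/
private def finOneSum (n : ℕ) : (Fin 1 ⊕ Fin n) ≃ Fin (n + 1) where
  toFun := Sum.elim (fun _ => 0) Fin.succ
  invFun i := Fin.cases (Sum.inl 0) Sum.inr i
  left_inv := by
    rintro (i | i)
    · simp [Subsingleton.elim i 0]
    · simp
  right_inv := by
    intro i
    induction i using Fin.cases <;> simp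

@[simp] private lemma finOneSum_inl (n : ℕ) (i : Fin 1) : finOneSum n (Sum.inl i) = 0 := rfl

@[simp] private lemma finOneSum_inr (n : ℕ) (i : Fin n) :
    finOneSum n (Sum.inr i) = i.succ := rfl

end ResolventAux

set_option maxHeartbeats 1000000 in
/-- Lemma "resHari": there are polynomials `T₁, T₂` with nonnegative
coefficients, depending only on `L_P`, bounding the norm of the resolvent of the linearization
in terms of the resolvent of `P`. -/
theorem resolvent_bound_for_linearization
    {k n : ℕ} (P : FreeAlgebra ℂ (Fin k))
    (L : Matrix (Fin (n+1)) (Fin (n+1)) (FreeAlgebra ℂ (Fin k)))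
    (hL : IsLinearization P L) :
    ∃ T1 T2 : MvPolynomial (Fin k) ℝ,
      (∀ d : Fin k →₀ ℕ, 0 ≤ MvPolynomial.coeff d T1) ∧
      (∀ d : Fin k →₀ ℕ, 0 ≤ MvPolynomial.coeff d T2) ∧
      ∀ (𝒜 : Type) [NormedRing 𝒜] [StarRing 𝒜] [CStarRing 𝒜] [NormedAlgebra ℂ 𝒜]
        [StarModule ℂ 𝒜] [CompleteSpace 𝒜],
        ∀ (y : Fin k → 𝒜) (z : ℂ),
          IsUnit (algebraMap ℂ 𝒜 z - evalPoly P y) →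
          matSumNorm (Ring.inverse
              (Matrix.single (0 : Fin (n+1)) (0 : Fin (n+1)) (algebraMap ℂ 𝒜 z)
                - L.map (fun p => evalPoly p y)))
            ≤ MvPolynomial.eval (fun i => ‖y i‖) T1 *
                ‖Ring.inverse (algebraMap ℂ 𝒜 z - evalPoly P y)‖
              + MvPolynomial.eval (fun i => ‖y i‖) T2 := by
  classical
  obtain ⟨hL00, -, Qi, hQ1, hQ2, hP⟩ := hL
  choose nb nbNN nbLE using fun p : FreeAlgebra ℂ (Fin k) => exists_bound p
  set U : Fin n → MvPolynomial (Fin k) ℝ :=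
    fun j => ∑ i, nb (L 0 i.succ) * nb (Qi i j) with hU
  set V : Fin n → MvPolynomial (Fin k) ℝ :=
    fun i => ∑ j, nb (Qi i j) * nb (L j.succ 0) with hV
  have hUN : ∀ j, NNC (U j) := fun j => by
    rw [hU]; exact NNC.sum _ _ fun i _ => (nbNN _).mul (nbNN _)
  have hVN : ∀ i, NNC (V i) := fun i => by
    rw [hV]; exact NNC.sum _ _ fun j _ => (nbNN _).mul (nbNN _)
  refine ⟨1 + (∑ j, U j) + (∑ i, V i) + (∑ i, V i) * (∑ j, U j),
    ∑ i, ∑ j, nb (Qi i j), ?_, ?_, ?_⟩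
  · exact ((NNC.one.add (NNC.sum _ _ fun j _ => hUN j)).add
      (NNC.sum _ _ fun i _ => hVN i)).add
      ((NNC.sum _ _ fun i _ => hVN i).mul (NNC.sum _ _ fun j _ => hUN j))
  · exact NNC.sum _ _ fun i _ => NNC.sum _ _ fun j _ => nbNN _
  intro 𝒜 _ _ _ _ _ _ y z hz
  set S : 𝒜 := algebraMap ℂ 𝒜 z - evalPoly P y with hS
  set R : 𝒜 := Ring.inverse S with hR
  have hSR : S * R = 1 := Ring.mul_inverse_cancel _ hz
  have hRS : R * S = 1 := Ring.inverse_mul_cancel _ hz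
  set M : Matrix (Fin (n+1)) (Fin (n+1)) 𝒜 :=
    Matrix.single (0 : Fin (n+1)) (0 : Fin (n+1)) (algebraMap ℂ 𝒜 z)
      - L.map (fun p => evalPoly p y) with hM
  set Qe : Matrix (Fin n) (Fin n) 𝒜 :=
    (L.submatrix Fin.succ Fin.succ).map (fun p => evalPoly p y) with hQe
  set Qi' : Matrix (Fin n) (Fin n) 𝒜 := Qi.map (fun p => evalPoly p y) with hQi'
  have hQe1 : Qe * Qi' = 1 := by
    have h := congrArg (AlgHom.mapMatrix (FreeAlgebra.lift ℂ y)) hQ1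
    rw [_root_.map_mul, _root_.map_one] at h
    exact h
  have hQe2 : Qi' * Qe = 1 := by
    have h := congrArg (AlgHom.mapMatrix (FreeAlgebra.lift ℂ y)) hQ2
    rw [_root_.map_mul, _root_.map_one] at h
    exact h
  set uc : Matrix (Fin 1) (Fin n) 𝒜 :=
    Matrix.of (fun _ j => evalPoly (L 0 j.succ) y) with huc
  set vc : Matrix (Fin n) (Fin 1) 𝒜 :=
    Matrix.of (fun i _ => evalPoly (L i.succ 0) y) with hvc
  set Rm : Matrix (Fin 1) (Fin 1) 𝒜 := Matrix.of (fun _ _ => R) with hRm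
  set Zm : Matrix (Fin 1) (Fin 1) 𝒜 :=
    Matrix.of (fun _ _ => algebraMap ℂ 𝒜 z) with hZm
  have hPev : evalPoly P y
      = -∑ a : Fin n, ∑ b : Fin n, evalPoly (L 0 a.succ) y *
          (evalPoly (Qi a b) y * evalPoly (L b.succ 0) y) := by
    rw [hP]
    simp [evalPoly, map_sum, _root_.map_mul, mul_assoc]
  have hSm : Zm + uc * (Qi' * vc) = Matrix.of (fun _ _ => S) := by
    ext i j
    have h1 : (uc * (Qi' * vc)) i j
        = ∑ a : Fin n, evalPoly (L 0 a.succ) y *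
            (∑ b : Fin n, evalPoly (Qi a b) y * evalPoly (L b.succ 0) y) := by
      simp [huc, hQi', hvc, Matrix.mul_apply, Matrix.map_apply]
    have h2 : S = algebraMap ℂ 𝒜 z + ∑ a : Fin n, ∑ b : Fin n,
        evalPoly (L 0 a.succ) y * (evalPoly (Qi a b) y * evalPoly (L b.succ 0) y) := by
      rw [hS, hPev, sub_neg_eq_add]
    simp only [Matrix.add_apply, Matrix.of_apply, hZm, h1, h2, Finset.mul_sum]
  have hSmR' : (Zm + uc * (Qi' * vc)) * Rm = 1 := by
    rw [hSm]
    ext i j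
    simp [hRm, Matrix.mul_apply, Matrix.one_apply, Fin.sum_univ_one, hSR,
      Subsingleton.elim i j]
  have hRSm' : Rm * (Zm + uc * (Qi' * vc)) = 1 := by
    rw [hSm]
    ext i j
    simp [hRm, Matrix.mul_apply, Matrix.one_apply, Fin.sum_univ_one, hRS,
      Subsingleton.elim i j]
  set M' : Matrix (Fin 1 ⊕ Fin n) (Fin 1 ⊕ Fin n) 𝒜 :=
    Matrix.fromBlocks Zm (-uc) (-vc) (-Qe) with hM'
  set N' : Matrix (Fin 1 ⊕ Fin n) (Fin 1 ⊕ Fin n) 𝒜 :=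
    Matrix.fromBlocks Rm (-(Rm * (uc * Qi'))) (-(Qi' * vc * Rm))
      (-Qi' + Qi' * vc * (Rm * (uc * Qi'))) with hN'
  have hMN : M' * N' = 1 := by
    rw [hM', hN', Matrix.fromBlocks_multiply, ← Matrix.fromBlocks_one,
      Matrix.fromBlocks_inj]
    refine ⟨?_, ?_, ?_, ?_⟩
    · calc Zm * Rm + (-uc) * (-(Qi' * vc * Rm)) = (Zm + uc * (Qi' * vc)) * Rm := by
            simp only [Matrix.neg_mul, Matrix.mul_neg, neg_neg, Matrix.mul_add,
              Matrix.add_mul, sub_eq_add_neg, Matrix.mul_assoc]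
            try abel
        _ = 1 := hSmR'
    · have h : Zm * (-(Rm * (uc * Qi'))) + (-uc) * (-Qi' + Qi' * vc * (Rm * (uc * Qi')))
          = uc * Qi' - (Zm + uc * (Qi' * vc)) * Rm * (uc * Qi') := by
        simp only [Matrix.neg_mul, Matrix.mul_neg, neg_neg, Matrix.mul_add,
          Matrix.add_mul, sub_eq_add_neg, Matrix.mul_assoc]
        try abel
      rw [h, hSmR', Matrix.one_mul, sub_self]
    · have h : (-vc) * Rm + (-Qe) * (-(Qi' * vc * Rm))
          = Qe * Qi' * (vc * Rm) - vc * Rm := by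
        simp only [Matrix.neg_mul, Matrix.mul_neg, neg_neg, Matrix.mul_add,
          Matrix.add_mul, sub_eq_add_neg, Matrix.mul_assoc]
        try abel
      rw [h, hQe1, Matrix.one_mul, sub_self]
    · have h : (-vc) * (-(Rm * (uc * Qi'))) + (-Qe) * (-Qi' + Qi' * vc * (Rm * (uc * Qi')))
          = Qe * Qi' + (vc * (Rm * (uc * Qi')) - Qe * Qi' * (vc * (Rm * (uc * Qi')))) := by
        simp only [Matrix.neg_mul, Matrix.mul_neg, neg_neg, Matrix.mul_add,
          Matrix.add_mul, sub_eq_add_neg, Matrix.mul_assoc]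
        try abel
      rw [h, hQe1, Matrix.one_mul, sub_self, add_zero]
  have hNM : N' * M' = 1 := by
    rw [hM', hN', Matrix.fromBlocks_multiply, ← Matrix.fromBlocks_one,
      Matrix.fromBlocks_inj]
    refine ⟨?_, ?_, ?_, ?_⟩
    · calc Rm * Zm + (-(Rm * (uc * Qi'))) * (-vc) = Rm * (Zm + uc * (Qi' * vc)) := by
            simp only [Matrix.neg_mul, Matrix.mul_neg, neg_neg, Matrix.mul_add,
              Matrix.add_mul, sub_eq_add_neg, Matrix.mul_assoc]
            try abel
        _ = 1 := hRSm'
    · have h : Rm * (-uc) + (-(Rm * (uc * Qi'))) * (-Qe)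
          = Rm * uc * (Qi' * Qe) - Rm * uc := by
        simp only [Matrix.neg_mul, Matrix.mul_neg, neg_neg, Matrix.mul_add,
          Matrix.add_mul, sub_eq_add_neg, Matrix.mul_assoc]
        try abel
      rw [h, hQe2, Matrix.mul_one, sub_self]
    · have h : (-(Qi' * vc * Rm)) * Zm + (-Qi' + Qi' * vc * (Rm * (uc * Qi'))) * (-vc)
          = Qi' * vc - Qi' * vc * (Rm * (Zm + uc * (Qi' * vc))) := by
        simp only [Matrix.neg_mul, Matrix.mul_neg, neg_neg, Matrix.mul_add,
          Matrix.add_mul, sub_eq_add_neg, Matrix.mul_assoc]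
        try abel
      rw [h, hRSm', Matrix.mul_one, sub_self]
    · have h : (-(Qi' * vc * Rm)) * (-uc) + (-Qi' + Qi' * vc * (Rm * (uc * Qi'))) * (-Qe)
          = Qi' * Qe + (Qi' * vc * (Rm * uc) - Qi' * vc * (Rm * uc) * (Qi' * Qe)) := by
        simp only [Matrix.neg_mul, Matrix.mul_neg, neg_neg, Matrix.mul_add,
          Matrix.add_mul, sub_eq_add_neg, Matrix.mul_assoc]
        try abel
      rw [h, hQe2, Matrix.mul_one, sub_self, add_zero]
  set e := finOneSum n with he
  have hsub : M.submatrix e e = M' := by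
    ext a b
    rcases a with a | a <;> rcases b with b | b <;>
      simp [hM, hM', he, Matrix.submatrix_apply, Matrix.sub_apply, Matrix.map_apply,
        Matrix.single, hL00, hZm, huc, hvc, hQe, evalPoly,
        Fin.succ_ne_zero, (Fin.succ_ne_zero _).symm]
  have hMeq : M = M'.submatrix e.symm e.symm := by
    rw [← hsub, Matrix.submatrix_submatrix, Equiv.self_comp_symm, Matrix.submatrix_id_id]
  set Nmat := N'.submatrix ⇑e.symm ⇑e.symm with hNmat
  have hMNu : M * Nmat = 1 := by
    rw [hMeq, hNmat, Matrix.submatrix_mul_equiv, hMN, Matrix.submatrix_one_equiv]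
  have hNMu : Nmat * M = 1 := by
    rw [hMeq, hNmat, Matrix.submatrix_mul_equiv, hNM, Matrix.submatrix_one_equiv]
  have hRinv : Ring.inverse M = Nmat :=
    Ring.inverse_unit (⟨M, Nmat, hMNu, hNMu⟩ : (Matrix (Fin (n+1)) (Fin (n+1)) 𝒜)ˣ)
  have hsum : matSumNorm Nmat = ∑ a : Fin 1 ⊕ Fin n, ∑ b : Fin 1 ⊕ Fin n, ‖N' a b‖ := by
    rw [hNmat]
    show ∑ i, ∑ j, ‖N' (e.symm i) (e.symm j)‖ = _
    calc ∑ i, ∑ j, ‖N' (e.symm i) (e.symm j)‖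
        = ∑ i, ∑ b, ‖N' (e.symm i) b‖ :=
          Finset.sum_congr rfl fun i _ => Equiv.sum_comp e.symm (fun b => ‖N' (e.symm i) b‖)
      _ = ∑ a, ∑ b, ‖N' a b‖ := Equiv.sum_comp e.symm (fun a => ∑ b, ‖N' a b‖)
  have hsplit : matSumNorm Nmat
      = ‖N' (Sum.inl 0) (Sum.inl 0)‖ + (∑ b : Fin n, ‖N' (Sum.inl 0) (Sum.inr b)‖)
        + (∑ a : Fin n, ‖N' (Sum.inr a) (Sum.inl 0)‖)
        + ∑ a : Fin n, ∑ b : Fin n, ‖N' (Sum.inr a) (Sum.inr b)‖ := by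
    rw [hsum]
    simp only [Fintype.sum_sum_type, Fin.sum_univ_one, Finset.sum_add_distrib]
    ring
  -- real scalar bounds
  set ub : Fin n → ℝ := fun i => MvPolynomial.eval (fun i => ‖y i‖) (nb (L 0 i.succ))
    with hub
  set vb : Fin n → ℝ := fun i => MvPolynomial.eval (fun i => ‖y i‖) (nb (L i.succ 0))
    with hvb
  set qb : Fin n → Fin n → ℝ :=
    fun i j => MvPolynomial.eval (fun i => ‖y i‖) (nb (Qi i j)) with hqb
  have hubNN : ∀ i, 0 ≤ ub i := fun i => by
    rw [hub]; exact evalNN (nbNN _) fun i => norm_nonneg _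
  have hvbNN : ∀ i, 0 ≤ vb i := fun i => by
    rw [hvb]; exact evalNN (nbNN _) fun i => norm_nonneg _
  have hqbNN : ∀ i j, 0 ≤ qb i j := fun i j => by
    rw [hqb]; exact evalNN (nbNN _) fun i => norm_nonneg _
  have hubB : ∀ i, ‖evalPoly (L 0 i.succ) y‖ ≤ ub i := fun i => by
    rw [hub]; exact nbLE _ 𝒜 y
  have hvbB : ∀ i, ‖evalPoly (L i.succ 0) y‖ ≤ vb i := fun i => by
    rw [hvb]; exact nbLE _ 𝒜 y
  have hqbB : ∀ i j, ‖evalPoly (Qi i j) y‖ ≤ qb i j := fun i j => by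
    rw [hqb]; exact nbLE _ 𝒜 y
  set Ub : Fin n → ℝ := fun b => ∑ a, ub a * qb a b with hUb
  set Va : Fin n → ℝ := fun a => ∑ b, qb a b * vb b with hVa
  have hUbNN : ∀ b, 0 ≤ Ub b := fun b => by
    rw [hUb]; exact Finset.sum_nonneg fun a _ => mul_nonneg (hubNN a) (hqbNN a b)
  have hVaNN : ∀ a, 0 ≤ Va a := fun a => by
    rw [hVa]; exact Finset.sum_nonneg fun b _ => mul_nonneg (hqbNN a b) (hvbNN b)
  have hsumU : ∀ b, ‖∑ a, evalPoly (L 0 a.succ) y * evalPoly (Qi a b) y‖ ≤ Ub b := by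
    intro b
    rw [hUb]
    exact (norm_sum_le _ _).trans (Finset.sum_le_sum fun a _ =>
      (norm_mul_le _ _).trans
        (mul_le_mul (hubB a) (hqbB a b) (norm_nonneg _) (hubNN a)))
  have hsumV : ∀ a, ‖∑ b, evalPoly (Qi a b) y * evalPoly (L b.succ 0) y‖ ≤ Va a := by
    intro a
    rw [hVa]
    exact (norm_sum_le _ _).trans (Finset.sum_le_sum fun b _ =>
      (norm_mul_le _ _).trans
        (mul_le_mul (hqbB a b) (hvbB b) (norm_nonneg _) (hqbNN a b)))
  -- entries of the inverse
  have n11 : N' (Sum.inl 0) (Sum.inl 0) = R := by simp [hN', hRm]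
  have n12 : ∀ b : Fin n, N' (Sum.inl 0) (Sum.inr b)
      = -(R * ∑ a, evalPoly (L 0 a.succ) y * evalPoly (Qi a b) y) := by
    intro b
    simp [hN', hRm, huc, hQi', Matrix.mul_apply, Matrix.map_apply, Fin.sum_univ_one]
  have n21 : ∀ a : Fin n, N' (Sum.inr a) (Sum.inl 0)
      = -((∑ b, evalPoly (Qi a b) y * evalPoly (L b.succ 0) y) * R) := by
    intro a
    simp [hN', hRm, hvc, hQi', Matrix.mul_apply, Matrix.map_apply, Fin.sum_univ_one]
  have n22 : ∀ a b : Fin n, N' (Sum.inr a) (Sum.inr b)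
      = -evalPoly (Qi a b) y + (∑ c, evalPoly (Qi a c) y * evalPoly (L c.succ 0) y) *
          (R * ∑ c, evalPoly (L 0 c.succ) y * evalPoly (Qi c b) y) := by
    intro a b
    simp [hN', hRm, huc, hvc, hQi', Matrix.mul_apply, Matrix.map_apply, Fin.sum_univ_one]
  -- bounds on the four pieces
  have b12 : ∑ b : Fin n, ‖N' (Sum.inl 0) (Sum.inr b)‖ ≤ ∑ b, ‖R‖ * Ub b :=
    Finset.sum_le_sum fun b _ => by
      rw [n12 b, norm_neg]
      exact (norm_mul_le _ _).trans (mul_le_mul_of_nonneg_left (hsumU b) (norm_nonneg R))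
  have b21 : ∑ a : Fin n, ‖N' (Sum.inr a) (Sum.inl 0)‖ ≤ ∑ a, Va a * ‖R‖ :=
    Finset.sum_le_sum fun a _ => by
      rw [n21 a, norm_neg]
      exact (norm_mul_le _ _).trans (mul_le_mul_of_nonneg_right (hsumV a) (norm_nonneg R))
  have b22 : ∑ a : Fin n, ∑ b : Fin n, ‖N' (Sum.inr a) (Sum.inr b)‖
      ≤ ∑ a, ∑ b, (qb a b + Va a * (‖R‖ * Ub b)) :=
    Finset.sum_le_sum fun a _ => Finset.sum_le_sum fun b _ => by
      rw [n22 a b]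
      refine (norm_add_le _ _).trans (add_le_add ?_ ?_)
      · rw [norm_neg]; exact hqbB a b
      · refine (norm_mul_le _ _).trans
          (mul_le_mul (hsumV a) ?_ (norm_nonneg _) (hVaNN a))
        exact (norm_mul_le _ _).trans (mul_le_mul_of_nonneg_left (hsumU b) (norm_nonneg R))
  -- evaluation of T1 and T2
  have hUe : ∀ b, MvPolynomial.eval (fun i => ‖y i‖) (U b) = Ub b := by
    intro b
    rw [hU, hUb]
    simp [map_sum, _root_.map_mul, hub, hqb]
  have hVe : ∀ a, MvPolynomial.eval (fun i => ‖y i‖) (V a) = Va a := by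
    intro a
    rw [hV, hVa]
    simp [map_sum, _root_.map_mul, hvb, hqb]
  have hT1e : MvPolynomial.eval (fun i => ‖y i‖)
      (1 + (∑ j, U j) + (∑ i, V i) + (∑ i, V i) * (∑ j, U j))
      = 1 + (∑ b, Ub b) + (∑ a, Va a) + (∑ a, Va a) * (∑ b, Ub b) := by
    simp [map_sum, _root_.map_mul, _root_.map_add, _root_.map_one, hUe, hVe]
  have hT2e : MvPolynomial.eval (fun i => ‖y i‖) (∑ i, ∑ j, nb (Qi i j))
      = ∑ a, ∑ b, qb a b := by
    rw [hqb]
    simp [map_sum]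
  -- final assembly
  rw [hRinv, hsplit, hT1e, hT2e]
  have h22sum : ∑ a : Fin n, ∑ b : Fin n, (qb a b + Va a * (‖R‖ * Ub b))
      = (∑ a, ∑ b, qb a b) + (∑ a, Va a) * (‖R‖ * ∑ b, Ub b) := by
    have hrow : ∀ a : Fin n, ∑ b, (qb a b + Va a * (‖R‖ * Ub b))
        = (∑ b, qb a b) + Va a * (‖R‖ * ∑ b, Ub b) := by
      intro a
      rw [Finset.sum_add_distrib]
      congr 1
      rw [← Finset.mul_sum, ← Finset.mul_sum]
    calc ∑ a : Fin n, ∑ b : Fin n, (qb a b + Va a * (‖R‖ * Ub b))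
        = ∑ a, ((∑ b, qb a b) + Va a * (‖R‖ * ∑ b, Ub b)) :=
          Finset.sum_congr rfl fun a _ => hrow a
      _ = (∑ a, ∑ b, qb a b) + (∑ a, Va a) * (‖R‖ * ∑ b, Ub b) := by
          rw [Finset.sum_add_distrib, ← Finset.sum_mul]
  calc ‖N' (Sum.inl 0) (Sum.inl 0)‖ + (∑ b : Fin n, ‖N' (Sum.inl 0) (Sum.inr b)‖)
        + (∑ a : Fin n, ‖N' (Sum.inr a) (Sum.inl 0)‖)
        + ∑ a : Fin n, ∑ b : Fin n, ‖N' (Sum.inr a) (Sum.inr b)‖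
      ≤ ‖R‖ + (∑ b, ‖R‖ * Ub b) + (∑ a, Va a * ‖R‖)
        + ((∑ a, ∑ b, qb a b) + (∑ a, Va a) * (‖R‖ * ∑ b, Ub b)) := by
        rw [← h22sum]
        exact add_le_add (add_le_add (add_le_add (le_of_eq (by rw [n11])) b12) b21) b22
    _ = (1 + (∑ b, Ub b) + (∑ a, Va a) + (∑ a, Va a) * (∑ b, Ub b)) * ‖R‖
        + ∑ a, ∑ b, qb a b := by
        rw [← Finset.mul_sum, ← Finset.sum_mul]
        ring

end NCOutliers
end
end
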